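/- Let g: ℝ → ℝ be convex, and let x₁ ≤ x₂ ≤ ... ≤ x_n and y₁ ≤ y₂ ≤ ... ≤ y_n be two sorted sequences of reals. Then for any permutation π of {1,...,n}, ∑ᵢ g(xᵢ - yᵢ) ≤ ∑ᵢ g(xᵢ - y_{π(i)}). That is, the identity matching of sorted values minimizes the total convex cost over all permutations. -/

import Mathlib

open Finset

lemma convex_increment_mono (g : ℝ → ℝ) (hg : ConvexOn ℝ Set.univ g)
    {u v e : ℝ} (huv : u ≤ v) (he : 0 ≤ e) :
    g (u + e) - g u ≤ g (v + e) - g v := by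
  rcases eq_or_lt_of_le he with rfl | he
  · simp
  have h1 : (g (u + e) - g u) / ((u + e) - u) ≤ (g (v + e) - g u) / ((v + e) - u) :=
    hg.secant_mono (Set.mem_univ u) (Set.mem_univ _) (Set.mem_univ _)
      (by linarith) (by linarith) (by linarith)
  have h2 : (g u - g (v + e)) / (u - (v + e)) ≤ (g v - g (v + e)) / (v - (v + e)) :=
    hg.secant_mono (Set.mem_univ (v + e)) (Set.mem_univ _) (Set.mem_univ _)
      (by linarith) (by linarith) huv
  have e3 : (g u - g (v + e)) / (u - (v + e)) = (g (v + e) - g u) / ((v + e) - u) := by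
    rw [← neg_div_neg_eq]; ring_nf
  have e4 : (g v - g (v + e)) / (v - (v + e)) = (g (v + e) - g v) / e := by
    rw [← neg_div_neg_eq]; ring_nf
  rw [e3, e4] at h2
  have h2' : (g (v + e) - g u) / ((v + e) - u) ≤ (g (v + e) - g v) / e := h2
  have h1' : (g (u + e) - g u) / e ≤ (g (v + e) - g v) / e := by
    calc (g (u + e) - g u) / e = (g (u + e) - g u) / ((u + e) - u) := by ring_nf
      _ ≤ (g (v + e) - g u) / ((v + e) - u) := h1
      _ ≤ (g (v + e) - g v) / e := h2'
  have := (div_le_div_iff_of_pos_right he).mp h1'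
  linarith

lemma convex_exchange (g : ℝ → ℝ) (hg : ConvexOn ℝ Set.univ g)
    {a b c d : ℝ} (hab : a ≤ b) (hcd : c ≤ d) :
    g (a - c) + g (b - d) ≤ g (a - d) + g (b - c) := by
  have := convex_increment_mono g hg (u := a - d) (v := b - d) (e := d - c)
    (by linarith) (by linarith)
  have e1 : a - d + (d - c) = a - c := by ring
  have e2 : b - d + (d - c) = b - c := by ring
  rw [e1, e2] at this
  linarith

theorem convex_sorted_matching_min (g : ℝ → ℝ) (hg : ConvexOn ℝ Set.univ g)
    (n : ℕ) (x y : Fin n → ℝ) (hx : Monotone x) (hy : Monotone y)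
    (π : Equiv.Perm (Fin n)) :
    ∑ i : Fin n, g (x i - y i) ≤ ∑ i : Fin n, g (x i - y (π i)) := by
  induction n with
  | zero => simp
  | succ n ih =>
    set L : Fin (n + 1) := Fin.last n with hL
    set k : Fin (n + 1) := π⁻¹ L with hk
    have hπk : π k = L := Equiv.apply_symm_apply π L
    set τ : Equiv.Perm (Fin (n + 1)) := π * Equiv.swap k L with hτ
    have hτL : τ L = L := by
      simp [hτ, Equiv.swap_apply_right, hπk]
    -- step 1: sum over τ ≤ sum over π
    have step1 : ∑ i, g (x i - y (τ i)) ≤ ∑ i, g (x i - y (π i)) := by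
      rcases eq_or_ne k L with hkL | hkL
      · simp [hτ, hkL]
      · have hτk : τ k = π L := by simp [hτ, Equiv.swap_apply_left]
        have hother : ∀ i, i ≠ k → i ≠ L → τ i = π i := by
          intro i h1 h2
          simp [hτ, Equiv.swap_apply_of_ne_of_ne h1 h2]
        have key : g (x k - y (τ k)) + g (x L - y (τ L)) ≤
            g (x k - y (π k)) + g (x L - y (π L)) := by
          rw [hτk, hτL, hπk]
          exact convex_exchange g hg (hx (Fin.le_last k)) (hy (Fin.le_last (π L)))
        have hsplit : ∀ (σ : Equiv.Perm (Fin (n + 1))),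
            ∑ i, g (x i - y (σ i)) =
              (∑ i ∈ (univ \ {k, L} : Finset (Fin (n+1))), g (x i - y (σ i)))
              + (g (x k - y (σ k)) + g (x L - y (σ L))) := by
          intro σ
          rw [← Finset.sum_sdiff (Finset.subset_univ ({k, L} : Finset (Fin (n+1)))), Finset.sum_pair hkL]
        rw [hsplit τ, hsplit π]
        have heq : ∑ i ∈ (univ \ {k, L} : Finset (Fin (n+1))), g (x i - y (τ i))
            = ∑ i ∈ (univ \ {k, L} : Finset (Fin (n+1))), g (x i - y (π i)) := by
          apply Finset.sum_congr rfl
          intro i hi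
          simp only [Finset.mem_sdiff, Finset.mem_insert, Finset.mem_singleton] at hi
          rw [hother i (fun h => hi.2 (Or.inl h)) (fun h => hi.2 (Or.inr h))]
        rw [heq]
        linarith
    -- step 2: sum over id ≤ sum over τ, using ih
    refine le_trans ?_ step1
    -- restrict τ to Fin n
    have hne : ∀ i : Fin n, τ i.castSucc ≠ L := by
      intro i h
      have hv := congrArg Fin.val (τ.injective (h.trans hτL.symm))
      simp [hL] at hv
      have := i.isLt
      omega
    have hne' : ∀ i : Fin n, (τ i.castSucc : Fin (n+1)) < L := by
      intro i
      exact lt_of_le_of_ne (Fin.le_last _) (hne i)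
    set σ : Fin n → Fin n := fun i => (τ i.castSucc).castPred (hne i) with hσ
    have hσinj : Function.Injective σ := by
      intro a b hab
      have : τ a.castSucc = τ b.castSucc := by
        have := congrArg Fin.castSucc hab
        simpa [hσ] using this
      exact Fin.castSucc_injective n (τ.injective this)
    let σe : Equiv.Perm (Fin n) := Equiv.ofBijective σ (Finite.injective_iff_bijective.mp hσinj)
    have hmain := ih (fun i => x i.castSucc) (fun i => y i.castSucc)
      (hx.comp Fin.strictMono_castSucc.monotone) (hy.comp Fin.strictMono_castSucc.monotone) σe
    rw [Fin.sum_univ_castSucc, Fin.sum_univ_castSucc (f := fun i => g (x i - y (τ i))), hτL]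
    have hcast : ∀ i : Fin n, y (τ i.castSucc) = y ((σe i).castSucc) := by
      intro i
      simp [σe, Equiv.ofBijective_apply, hσ, Fin.castSucc_castPred]
    simp only [hcast]
    exact add_le_add_left hmain _
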